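/- Let d be even and suppose {X^k, Y^k, Λ^k} is generated by the nonconvex ADMM iteration for the rank-one reformulation, with Sym(Λ^0) = A and Y^0 symmetric. Then for every k ≥ 1: Sym(Λ^k) = A and Y^k = Sym(X^k). Consequently the iteration simplifies to X^{k+1} ∈ argmin_{X ∈ C} ⟨−Λ^k − τ Sym(X^k), X⟩ and Λ^{k+1} = Λ^k − τ(X^{k+1} − Sym(X^{k+1})). -/
import Mathlib


open scoped BigOperators
open Matrix

namespace SpherePoly

noncomputable def tinner {n d : ℕ} (A B : (Fin d → Fin n) → ℝ) : ℝ :=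
  ∑ i : Fin d → Fin n, A i * B i

noncomputable def symT {n d : ℕ} (A : (Fin d → Fin n) → ℝ) : (Fin d → Fin n) → ℝ :=
  fun i => (∑ π : Equiv.Perm (Fin d), A (i ∘ π)) / (Nat.factorial d : ℝ)

def IsSymT {n d : ℕ} (A : (Fin d → Fin n) → ℝ) : Prop :=
  ∀ (π : Equiv.Perm (Fin d)) (i : Fin d → Fin n), A (i ∘ π) = A i

def mat2 {n m : ℕ} (X : (Fin (2 * m) → Fin n) → ℝ) :
    Matrix (Fin m → Fin n) (Fin m → Fin n) ℝ :=
  fun a b => X fun i => Sum.elim a b (finSumFinEquiv.symm (Fin.cast (by omega) i))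

def CSet (n m : ℕ) : Set ((Fin (2 * m) → Fin n) → ℝ) :=
  {X | ∃ z : (Fin m → Fin n) → ℝ, (∑ a, z a ^ 2 = 1) ∧ ∀ a b, mat2 X a b = z a * z b}

/-- The augmented Lagrangian `L_τ(X, Y, Λ) = ⟨−A, Y⟩ − ⟨Λ, X−Y⟩ + (τ/2)‖X−Y‖²`. -/
noncomputable def Ltau {n m : ℕ} (A : (Fin (2 * m) → Fin n) → ℝ) (τ : ℝ)
    (X Y Λ : (Fin (2 * m) → Fin n) → ℝ) : ℝ :=
  tinner (fun i => -A i) Y - tinner Λ (X - Y) + (τ / 2) * ∑ i, (X i - Y i) ^ 2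

lemma symT_eq_self {n d : ℕ} {A : (Fin d → Fin n) → ℝ} (h : IsSymT A) : symT A = A := by
  funext i
  have h2 : ∀ π : Equiv.Perm (Fin d), A (i ∘ π) = A i := fun π => h π i
  simp only [symT, h2, Finset.sum_const, Finset.card_univ, Fintype.card_perm, nsmul_eq_mul]
  rw [Fintype.card_fin]
  field_simp

lemma isSymT_symT {n d : ℕ} (A : (Fin d → Fin n) → ℝ) : IsSymT (symT A) := by
  intro σ i
  simp only [symT]
  congr 1
  rw [← Equiv.sum_comp (Equiv.mulLeft σ) (fun π => A (i ∘ π))]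
  apply Finset.sum_congr rfl
  intro π _
  simp [Equiv.Perm.coe_mul, Function.comp_assoc]

lemma symT_symT {n d : ℕ} (A : (Fin d → Fin n) → ℝ) : symT (symT A) = symT A :=
  symT_eq_self (isSymT_symT A)

lemma symT_sub {n d : ℕ} (A B : (Fin d → Fin n) → ℝ) : symT (A - B) = symT A - symT B := by
  funext i
  simp [symT, Finset.sum_sub_distrib, sub_div]

lemma symT_smul {n d : ℕ} (c : ℝ) (A : (Fin d → Fin n) → ℝ) : symT (c • A) = c • symT A := by
  funext i
  simp [symT, ← Finset.mul_sum, mul_div_assoc]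

lemma symT_comb {n d : ℕ} (A B C : (Fin d → Fin n) → ℝ) (t : ℝ) :
    symT (fun i => A i - B i + t * C i) =
      fun j => symT A j - symT B j + t * symT C j := by
  funext j
  simp only [symT, Finset.sum_add_distrib, Finset.sum_sub_distrib, ← Finset.mul_sum]
  ring

lemma sum_sq_eq_one {n m : ℕ} {Z : (Fin (2 * m) → Fin n) → ℝ} (hZ : Z ∈ CSet n m) :
    ∑ i, Z i ^ 2 = 1 := by
  obtain ⟨z, hz, hm⟩ := hZ
  let e : ((Fin m → Fin n) × (Fin m → Fin n)) ≃ (Fin (2 * m) → Fin n) :=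
    (Equiv.sumArrowEquivProdArrow (Fin m) (Fin m) (Fin n)).symm.trans
      (Equiv.arrowCongr (finSumFinEquiv.trans (finCongr (two_mul m).symm)) (Equiv.refl (Fin n)))
  have he : ∀ p : (Fin m → Fin n) × (Fin m → Fin n), Z (e p) = mat2 Z p.1 p.2 := by
    intro p
    simp only [e, mat2, Equiv.trans_apply, Equiv.arrowCongr_apply, Equiv.sumArrowEquivProdArrow,
      Equiv.coe_fn_symm_mk, Equiv.coe_refl, Function.comp]
    congr 1
  calc ∑ i, Z i ^ 2 = ∑ p : (Fin m → Fin n) × (Fin m → Fin n), Z (e p) ^ 2 :=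
        (Equiv.sum_comp e fun i => Z i ^ 2).symm
    _ = ∑ p : (Fin m → Fin n) × (Fin m → Fin n), (z p.1 * z p.2) ^ 2 := by
        simp only [he]
        exact Finset.sum_congr rfl fun p _ => by rw [hm]
    _ = (∑ a, z a ^ 2) * (∑ b, z b ^ 2) := by
        rw [Fintype.sum_prod_type, Finset.sum_mul_sum]
        exact Finset.sum_congr rfl fun a _ => Finset.sum_congr rfl fun b _ => by ring
    _ = 1 := by rw [hz]; ring

lemma Ltau_expand {n m : ℕ} (A : (Fin (2 * m) → Fin n) → ℝ) (τ : ℝ)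
    (Z Y Λ : (Fin (2 * m) → Fin n) → ℝ) (hZ : ∑ i, Z i ^ 2 = 1) :
    Ltau A τ Z Y Λ =
      (tinner (fun i => -A i) Y + tinner Λ Y + τ / 2 * (1 + ∑ i, Y i ^ 2)) +
        tinner (fun i => -Λ i - τ * Y i) Z := by
  have h1 : ∑ i, (Z i - Y i) ^ 2 =
      (∑ i, Z i ^ 2) + (∑ i, (Z i * Y i)) * (-2) + ∑ i, Y i ^ 2 := by
    rw [Finset.sum_mul, ← Finset.sum_add_distrib, ← Finset.sum_add_distrib]
    exact Finset.sum_congr rfl fun i _ => by ring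
  have h2 : tinner Λ (Z - Y) = (∑ i, Λ i * Z i) - ∑ i, Λ i * Y i := by
    simp only [tinner, Pi.sub_apply, mul_sub, Finset.sum_sub_distrib]
  have h3 : tinner (fun i => -Λ i - τ * Y i) Z =
      -(∑ i, Λ i * Z i) - τ * ∑ i, Z i * Y i := by
    simp only [tinner, ← Finset.sum_neg_distrib, Finset.mul_sum,
      ← Finset.sum_sub_distrib]
    exact Finset.sum_congr rfl fun i _ => by ring
  have h4 : tinner Λ Y = ∑ i, Λ i * Y i := rfl
  simp only [Ltau, h2, h4, h3, h1, hZ]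
  ring

/-- along the nonconvex ADMM iteration with `Sym(Λ⁰) = A` and `Y⁰`
symmetric, for every `k ≥ 1` one has `Sym(Λᵏ) = A` and `Yᵏ = Sym(Xᵏ)`; consequently the
iteration simplifies to `X^{k+1} ∈ argmin_{X∈C} ⟨−Λᵏ − τ Sym(Xᵏ), X⟩` and
`Λ^{k+1} = Λᵏ − τ(X^{k+1} − Sym(X^{k+1}))`. -/
theorem stmt18 {n m : ℕ} (A : (Fin (2 * m) → Fin n) → ℝ) (hA : IsSymT A)
    (τ : ℝ) (hτ : 0 < τ)
    (X Y Λ : ℕ → (Fin (2 * m) → Fin n) → ℝ)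
    (hΛ0 : symT (Λ 0) = A) (hY0 : IsSymT (Y 0))
    (hX : ∀ k, X (k + 1) ∈ CSet n m ∧
      ∀ Z ∈ CSet n m, Ltau A τ (X (k + 1)) (Y k) (Λ k) ≤ Ltau A τ Z (Y k) (Λ k))
    (hY : ∀ k, Y (k + 1) = τ⁻¹ • symT (fun i => A i - Λ k i + τ * X (k + 1) i))
    (hL : ∀ k, Λ (k + 1) = Λ k - τ • (X (k + 1) - Y (k + 1))) :
    ∀ k, 1 ≤ k →
      symT (Λ k) = A ∧ Y k = symT (X k) ∧
      (∀ Z ∈ CSet n m,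
        tinner (fun i => -Λ k i - τ * symT (X k) i) (X (k + 1)) ≤
          tinner (fun i => -Λ k i - τ * symT (X k) i) Z) ∧
      Λ (k + 1) = Λ k - τ • (X (k + 1) - symT (X (k + 1))) := by
  have hAs : symT A = A := symT_eq_self hA
  have hτ' : τ ≠ 0 := ne_of_gt hτ
  have hYk : ∀ k, symT (Λ k) = A → Y (k + 1) = symT (X (k + 1)) := by
    intro k hk
    rw [hY k, symT_comb, hAs, hk]
    funext j
    simp only [Pi.smul_apply, smul_eq_mul, sub_self, zero_add]
    rw [← mul_assoc, inv_mul_cancel₀ hτ', one_mul]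
  have hΛk : ∀ k, symT (Λ k) = A := by
    intro k
    induction k with
    | zero => exact hΛ0
    | succ k ih =>
      rw [hL k, hYk k ih, symT_sub, symT_smul, symT_sub, symT_symT, sub_self, smul_zero,
        sub_zero, ih]
  intro k hk
  obtain ⟨j, rfl⟩ : ∃ j, k = j + 1 := ⟨k - 1, by omega⟩
  have hYeq : Y (j + 1) = symT (X (j + 1)) := hYk j (hΛk j)
  refine ⟨hΛk (j + 1), hYeq, ?_, ?_⟩
  · intro Z hZC
    have h1 := (hX (j + 1)).2 Z hZC
    rw [Ltau_expand A τ _ _ _ (sum_sq_eq_one (hX (j + 1)).1),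
      Ltau_expand A τ _ _ _ (sum_sq_eq_one hZC)] at h1
    rw [← hYeq]
    exact le_of_add_le_add_left h1
  · rw [hL (j + 1), hYk (j + 1) (hΛk (j + 1))]

end SpherePoly
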